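/- Let G be a group, H = G/ζ^↑(G) its quotient by the hypercenter, and π : G → H the projection. If G = A × B is an internal direct product of subgroups, then H is the internal direct product of π(A) and π(B). -/
import Mathlib
open scoped Pointwise


theorem quotient_by_hypercenter_decomposition {G : Type*} [Group G]
    (Z : Subgroup G) (hZn : Z.Normal)
    (hZcenter : Subgroup.center (G ⧸ Z) = ⊥)
    (hZmin : ∀ M : Subgroup G, ∀ _ : M.Normal, Subgroup.center (G ⧸ M) = ⊥ → Z ≤ M)
    (A B : Subgroup G) (hAn : A.Normal) (hBn : B.Normal)
    (hcomm : ∀ x ∈ A, ∀ y ∈ B, Commute x y)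
    (hinf : A ⊓ B = ⊥) (hsup : A ⊔ B = ⊤) :
    (A.map (QuotientGroup.mk' Z)) ⊓ (B.map (QuotientGroup.mk' Z)) = ⊥ ∧
    (A.map (QuotientGroup.mk' Z)) ⊔ (B.map (QuotientGroup.mk' Z)) = ⊤ ∧
    ∀ x ∈ A.map (QuotientGroup.mk' Z), ∀ y ∈ B.map (QuotientGroup.mk' Z), Commute x y := by
  set f := QuotientGroup.mk' Z with hf
  have hsurj : Function.Surjective f := QuotientGroup.mk'_surjective Z
  have hcomm' : ∀ x ∈ A.map f, ∀ y ∈ B.map f, Commute x y := by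
    rintro _ ⟨a, ha, rfl⟩ _ ⟨b, hb, rfl⟩
    exact (hcomm a ha b hb).map f
  have hsup' : A.map f ⊔ B.map f = ⊤ := by
    rw [← Subgroup.map_sup, hsup, Subgroup.map_top_of_surjective f hsurj]
  refine ⟨?_, hsup', hcomm'⟩
  rw [eq_bot_iff]
  intro x hx
  have hxA := hx.1
  have hxB := hx.2
  have hBn' : (B.map f).Normal := Subgroup.Normal.map hBn f hsurj
  have hxc : x ∈ Subgroup.center (G ⧸ Z) := by
    rw [Subgroup.mem_center_iff]
    intro y
    have hy : y ∈ A.map f ⊔ B.map f := by rw [hsup']; trivial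
    have hy' : y ∈ ((A.map f : Set (G ⧸ Z)) * (B.map f : Set (G ⧸ Z))) := by
      rw [← Subgroup.mul_normal]; exact hy
    obtain ⟨a, ha, b, hb, rfl⟩ := hy'
    have h1 : Commute x a := (hcomm' a ha x hxB).symm
    have h2 : Commute x b := hcomm' x hxA b hb
    exact (h1.mul_right h2).symm
  rw [hZcenter] at hxc
  exact hxc
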